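/- Let 0 < ε < T, I := [ε,T]^N, let h₁ : I → ℝ be continuous with 0 < m₁ ≤ h₁(v) ≤ M₁ < 1 for all v ∈ I, and let θ : I → ℝ be continuous. Then ∫_I ∫_ε^T |t − v₁|^{−θ(v)·h₁(v)} dt dv < ∞ (where v₁ denotes the first coordinate of v) if and only if both of the following hold: (a) θ(v) ≤ 1/h₁(v) for every v ∈ I, and (b) ∫_I (1/h₁(v) − θ(v))^{−1} dv < ∞. -/

import Mathlib

open MeasureTheory Finset
open scoped ENNReal

section Aux

open Set

private theorem aux_subRight_lint (c ℓ : ℝ) (f : ℝ → ℝ≥0∞) :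
    ∫⁻ t in Ioo c (c + ℓ), f (t - c) = ∫⁻ s in Ioo (0:ℝ) ℓ, f s := by
  have h := (measurePreserving_sub_right (volume : Measure ℝ) c).setLIntegral_comp_preimage_emb
    (MeasurableEquiv.subRight c).measurableEmbedding f (Ioo 0 ℓ)
  have hset : (fun x : ℝ => x - c) ⁻¹' Ioo (0:ℝ) ℓ = Ioo c (c + ℓ) := by
    ext t
    simp only [Set.mem_preimage, Set.mem_Ioo]
    constructor <;> intro h <;> exact ⟨by linarith [h.1, h.2], by linarith [h.1, h.2]⟩
  rw [hset] at h
  exact h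

private theorem aux_subLeft_lint (c ℓ : ℝ) (f : ℝ → ℝ≥0∞) :
    ∫⁻ t in Ioo (c - ℓ) c, f (c - t) = ∫⁻ s in Ioo (0:ℝ) ℓ, f s := by
  have h := (Measure.measurePreserving_sub_left (volume : Measure ℝ) c).setLIntegral_comp_preimage_emb
    (MeasurableEquiv.subLeft c).measurableEmbedding f (Ioo 0 ℓ)
  have hset : (fun x : ℝ => c - x) ⁻¹' Ioo (0:ℝ) ℓ = Ioo (c - ℓ) c := by
    ext t
    simp only [Set.mem_preimage, Set.mem_Ioo]
    constructor <;> intro h <;> exact ⟨by linarith [h.1, h.2], by linarith [h.1, h.2]⟩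
  rw [hset] at h
  exact h

private theorem aux_coreK (ℓ a : ℝ) (hℓ : 0 ≤ ℓ) (ha : a < 1) :
    ∫⁻ s in Ioo (0:ℝ) ℓ, ENNReal.ofReal (s ^ (-a)) =
      ENNReal.ofReal (ℓ ^ (1 - a) / (1 - a)) := by
  rcases eq_or_lt_of_le hℓ with rfl | hℓ
  · simp [Real.zero_rpow (by linarith : (1:ℝ) - a ≠ 0)]
  have hint : IntegrableOn (fun s : ℝ => s ^ (-a)) (Ioo 0 ℓ) :=
    (intervalIntegral.integrableOn_Ioo_rpow_iff hℓ).2 (by linarith)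
  rw [← ofReal_integral_eq_lintegral_ofReal hint ?_]
  · congr 1
    have := integral_rpow (a := 0) (b := ℓ) (r := -a) (Or.inl (by linarith))
    rw [intervalIntegral.integral_of_le hℓ.le] at this
    rw [← setIntegral_congr_set Ioo_ae_eq_Ioc] at this
    rw [this, Real.zero_rpow (by linarith : -a + 1 ≠ 0)]
    ring_nf
  · filter_upwards [ae_restrict_mem measurableSet_Ioo] with s hs using
      Real.rpow_nonneg hs.1.le _

private theorem aux_coreK_top (ℓ a : ℝ) (hℓ : 0 < ℓ) (ha : 1 ≤ a) :
    ∫⁻ s in Ioo (0:ℝ) ℓ, ENNReal.ofReal (s ^ (-a)) = ∞ := by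
  by_contra h
  have hmeas : AEMeasurable (fun s : ℝ => s ^ (-a)) (volume.restrict (Ioo 0 ℓ)) :=
    ContinuousOn.aemeasurable
      (ContinuousOn.rpow_const continuousOn_id (fun x hx => Or.inl (ne_of_gt hx.1)))
      measurableSet_Ioo
  have hint : IntegrableOn (fun s : ℝ => s ^ (-a)) (Ioo 0 ℓ) := by
    refine ⟨hmeas.aestronglyMeasurable, ?_⟩
    rw [hasFiniteIntegral_iff_ofReal ?_]
    · exact Ne.lt_top h
    · filter_upwards [ae_restrict_mem measurableSet_Ioo] with s hs using
        Real.rpow_nonneg hs.1.le _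
  rw [intervalIntegral.integrableOn_Ioo_rpow_iff hℓ] at hint
  linarith

private theorem aux_G_split (ε T c a : ℝ) (hc : c ∈ Icc ε T) :
    ∫⁻ t in Icc ε T, (ENNReal.ofReal |t - c|) ^ (-a)
      = (∫⁻ s in Ioo (0:ℝ) (c - ε), ENNReal.ofReal (s ^ (-a)))
        + (∫⁻ s in Ioo (0:ℝ) (T - c), ENNReal.ofReal (s ^ (-a))) := by
  obtain ⟨hc1, hc2⟩ := hc
  have hne : ∀ᵐ t : ℝ, t ≠ c := by
    have h0 : (volume : Measure ℝ) {c} = 0 := Real.volume_singleton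
    exact compl_mem_ae_iff.2 h0
  have step1 : ∫⁻ t in Icc ε T, (ENNReal.ofReal |t - c|) ^ (-a)
      = ∫⁻ t in Icc ε T, ENNReal.ofReal (|t - c| ^ (-a)) := by
    refine lintegral_congr_ae (ae_restrict_of_ae ?_)
    filter_upwards [hne] with t ht
    exact ENNReal.ofReal_rpow_of_pos (abs_pos.2 (sub_ne_zero.2 ht))
  rw [step1]
  have hres : (volume : Measure ℝ).restrict (Icc ε T)
      = volume.restrict (Ioo ε c ∪ Ioo c T) := by
    refine Measure.restrict_congr_set ?_
    have h1 : (Icc ε T : Set ℝ) =ᵐ[volume] Ioo ε T :=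
      (Ioo_ae_eq_Icc (μ := volume) (a := ε) (b := T)).symm
    refine h1.trans ?_
    rw [Filter.eventuallyEq_set]
    filter_upwards [hne] with t ht
    simp only [Set.mem_union, Set.mem_Ioo]
    constructor
    · rintro ⟨h1, h2⟩
      rcases lt_or_gt_of_ne ht with h | h
      · exact Or.inl ⟨h1, h⟩
      · exact Or.inr ⟨h, h2⟩
    · rintro (⟨h1, h2⟩ | ⟨h1, h2⟩) <;> exact ⟨by linarith, by linarith⟩
  rw [hres, lintegral_union measurableSet_Ioo
    (Set.disjoint_left.mpr fun x hx1 hx2 => absurd hx2.1 (lt_asymm hx1.2))]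
  congr 1
  · have : ∀ t ∈ Ioo ε c, ENNReal.ofReal (|t - c| ^ (-a))
        = ENNReal.ofReal ((c - t) ^ (-a)) := by
      intro t ht
      rw [abs_sub_comm, abs_of_pos (by linarith [ht.2])]
    rw [setLIntegral_congr_fun measurableSet_Ioo (fun t ht => this t ht)]
    have := aux_subLeft_lint c (c - ε) (fun s => ENNReal.ofReal (s ^ (-a)))
    rw [show c - (c - ε) = ε by ring] at this
    exact this
  · have : ∀ t ∈ Ioo c T, ENNReal.ofReal (|t - c| ^ (-a))
        = ENNReal.ofReal ((t - c) ^ (-a)) := by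
      intro t ht
      rw [abs_of_pos (by linarith [ht.1])]
    rw [setLIntegral_congr_fun measurableSet_Ioo (fun t ht => this t ht)]
    have := aux_subRight_lint c (T - c) (fun s => ENNReal.ofReal (s ^ (-a)))
    rw [show c + (T - c) = T by ring] at this
    exact this

private theorem aux_rpow_bounds (x p q : ℝ) (hx : 0 < x) (hp : 0 < p) (hpq : p ≤ q) :
    min 1 (x ^ q) ≤ x ^ p ∧ x ^ p ≤ max 1 (x ^ q) := by
  rcases le_total x 1 with h | h
  · constructor
    · exact (min_le_right _ _).trans (Real.rpow_le_rpow_of_exponent_ge hx h hpq)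
    · exact le_max_of_le_left (Real.rpow_le_one hx.le h hp.le)
  · constructor
    · exact (min_le_left _ _).trans (Real.one_le_rpow h hp.le)
    · exact le_max_of_le_right (Real.rpow_le_rpow_of_exponent_le h hpq)

/-- The value of the inner integral. -/
private theorem aux_G_value (ε T c a : ℝ) (hεT : ε < T) (hc : c ∈ Icc ε T) (ha : a < 1) :
    ∫⁻ t in Icc ε T, (ENNReal.ofReal |t - c|) ^ (-a)
      = ENNReal.ofReal (((c - ε) ^ (1 - a) + (T - c) ^ (1 - a)) / (1 - a)) := by
  rw [aux_G_split ε T c a hc, aux_coreK _ _ (by linarith [hc.1]) ha,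
    aux_coreK _ _ (by linarith [hc.2]) ha, ← ENNReal.ofReal_add
      (div_nonneg (Real.rpow_nonneg (by linarith [hc.1]) _) (by linarith))
      (div_nonneg (Real.rpow_nonneg (by linarith [hc.2]) _) (by linarith))]
  rw [← add_div]

private theorem aux_G_top (ε T c a : ℝ) (hεT : ε < T) (hc : c ∈ Icc ε T) (ha : 1 ≤ a) :
    ∫⁻ t in Icc ε T, (ENNReal.ofReal |t - c|) ^ (-a) = ∞ := by
  rw [aux_G_split ε T c a hc]
  rcases le_total c ((ε + T) / 2) with h | h
  · rw [aux_coreK_top (T - c) a (by linarith) ha]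
    simp
  · rw [aux_coreK_top (c - ε) a (by linarith) ha]
    simp

end Aux

/-- Step 1 (one time-variable coordinate) of the induction proving the
integral-finiteness equivalence used for Theorem 2.1. All integrals are Lebesgue
integrals with values in `[0,∞]`; the conventions `0^{-a} = ∞` (`a > 0`) and
`0⁻¹ = ∞` are realized by `ENNReal` arithmetic. -/
theorem integral_finiteness_equivalence_base_case (N : ℕ) (hN : 0 < N) (ε T : ℝ)
    (hε : 0 < ε) (hεT : ε < T)
    (h₁ : (Fin N → ℝ) → ℝ) (θ : (Fin N → ℝ) → ℝ) (m₁ M₁ : ℝ)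
    (hm : 0 < m₁) (hM : M₁ < 1)
    (hh : ∀ v ∈ Set.Icc (fun _ : Fin N => ε) (fun _ => T),
      m₁ ≤ h₁ v ∧ h₁ v ≤ M₁)
    (hhcont : ContinuousOn h₁ (Set.Icc (fun _ : Fin N => ε) (fun _ => T)))
    (hθcont : ContinuousOn θ (Set.Icc (fun _ : Fin N => ε) (fun _ => T))) :
    (∫⁻ v in Set.Icc (fun _ : Fin N => ε) (fun _ => T),
        ∫⁻ t in Set.Icc ε T,
          (ENNReal.ofReal |t - v ⟨0, hN⟩|) ^ (-(θ v * h₁ v))) < ⊤ ↔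
      ((∀ v ∈ Set.Icc (fun _ : Fin N => ε) (fun _ => T), θ v ≤ 1 / h₁ v) ∧
        (∫⁻ v in Set.Icc (fun _ : Fin N => ε) (fun _ => T),
          (ENNReal.ofReal (1 / h₁ v - θ v))⁻¹) < ⊤) := by
  set I : Set (Fin N → ℝ) := Set.Icc (fun _ : Fin N => ε) (fun _ => T) with hI
  have hImeas : MeasurableSet I := measurableSet_Icc
  have hL : (0:ℝ) < T - ε := by linarith
  -- bound on θ
  have hIcompact : IsCompact I := isCompact_Icc
  obtain ⟨B, hB⟩ := hIcompact.exists_bound_of_continuousOn hθcont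
  set B' : ℝ := max B 0 with hB'
  have hB'0 : 0 ≤ B' := le_max_right _ _
  have habs : ∀ v ∈ I, |θ v * h₁ v| ≤ B' := by
    intro v hv
    have h1 : m₁ ≤ h₁ v := (hh v hv).1
    have h2 : h₁ v ≤ M₁ := (hh v hv).2
    have h3 : |θ v| ≤ B' := (hB v hv).trans (le_max_left _ _)
    calc |θ v * h₁ v| = |θ v| * |h₁ v| := abs_mul _ _
      _ ≤ B' * 1 := by
          apply mul_le_mul h3 ?_ (abs_nonneg _) hB'0
          rw [abs_of_pos (by linarith)]
          linarith
      _ = B' := mul_one B'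
  -- constants
  set c₀ : ℝ := min 1 (((T - ε) / 2) ^ (1 + B')) with hc₀def
  set C₁ : ℝ := 2 * max 1 ((T - ε) ^ (1 + B')) with hC₁def
  have hc₀ : 0 < c₀ := lt_min one_pos (Real.rpow_pos_of_pos (by linarith) _)
  have hC₁ : 0 < C₁ := by positivity
  have hC₂ : 0 < C₁ / m₁ := by positivity
  -- notation
  set G : (Fin N → ℝ) → ℝ≥0∞ := fun v => ∫⁻ t in Set.Icc ε T,
    (ENNReal.ofReal |t - v ⟨0, hN⟩|) ^ (-(θ v * h₁ v)) with hGdef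
  set H : (Fin N → ℝ) → ℝ≥0∞ := fun v => (ENNReal.ofReal (1 / h₁ v - θ v))⁻¹ with hHdef
  -- the key pointwise comparison
  have key : ∀ v ∈ I, ENNReal.ofReal c₀ * H v ≤ G v ∧ G v ≤ ENNReal.ofReal (C₁ / m₁) * H v := by
    intro v hv
    set c : ℝ := v ⟨0, hN⟩ with hcdef
    have hcI : c ∈ Set.Icc ε T := ⟨hv.1 ⟨0, hN⟩, hv.2 ⟨0, hN⟩⟩
    set a : ℝ := θ v * h₁ v with hadef
    have hh1 : m₁ ≤ h₁ v := (hh v hv).1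
    have hh2 : h₁ v ≤ M₁ := (hh v hv).2
    have hhpos : 0 < h₁ v := by linarith
    have hsub : 1 / h₁ v - θ v = (1 - a) / h₁ v := by
      field_simp [hadef]
      ring
    rcases lt_or_ge a 1 with ha | ha
    · -- a < 1 : both sides finite with explicit values
      have h1a : 0 < 1 - a := by linarith
      have hple : 1 - a ≤ 1 + B' := by
        have := (abs_le.mp (habs v hv)).1
        linarith
      have hGv : G v = ENNReal.ofReal
          (((c - ε) ^ (1 - a) + (T - c) ^ (1 - a)) / (1 - a)) :=
        aux_G_value ε T c a hεT hcI ha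
      have hHv : H v = ENNReal.ofReal (h₁ v / (1 - a)) := by
        rw [hHdef]
        simp only
        rw [hsub, ← ENNReal.ofReal_inv_of_pos (by positivity), inv_div]
      -- bounds on S
      set S : ℝ := (c - ε) ^ (1 - a) + (T - c) ^ (1 - a) with hSdef
      have hSle : S ≤ C₁ := by
        have hb1 : (c - ε) ^ (1 - a) ≤ max 1 ((T - ε) ^ (1 + B')) := by
          refine le_trans (Real.rpow_le_rpow (sub_nonneg.2 hcI.1)
            (by linarith [hcI.2] : c - ε ≤ T - ε) h1a.le) ?_
          exact (aux_rpow_bounds (T - ε) (1 - a) (1 + B') (by linarith) h1a hple).2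
        have hb2 : (T - c) ^ (1 - a) ≤ max 1 ((T - ε) ^ (1 + B')) := by
          refine le_trans (Real.rpow_le_rpow (sub_nonneg.2 hcI.2)
            (by linarith [hcI.1] : T - c ≤ T - ε) h1a.le) ?_
          exact (aux_rpow_bounds (T - ε) (1 - a) (1 + B') (by linarith) h1a hple).2
        rw [hSdef, hC₁def]
        linarith
      have hSge : c₀ ≤ S := by
        have half : min 1 (((T - ε) / 2) ^ (1 + B')) ≤ ((T - ε) / 2) ^ (1 - a) :=
          (aux_rpow_bounds ((T - ε) / 2) (1 - a) (1 + B') (by linarith) h1a hple).1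
        rcases le_total c ((ε + T) / 2) with h | h
        · have h2 : (T - ε) / 2 ≤ T - c := by linarith
          have := Real.rpow_le_rpow (by linarith : (0:ℝ) ≤ (T - ε)/2) h2 h1a.le
          have hnn : 0 ≤ (c - ε) ^ (1 - a) := Real.rpow_nonneg (by linarith [hcI.1]) _
          rw [hc₀def, hSdef]
          linarith
        · have h2 : (T - ε) / 2 ≤ c - ε := by linarith
          have := Real.rpow_le_rpow (by linarith : (0:ℝ) ≤ (T - ε)/2) h2 h1a.le
          have hnn : 0 ≤ (T - c) ^ (1 - a) := Real.rpow_nonneg (by linarith [hcI.2]) _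
          rw [hc₀def, hSdef]
          linarith
      have hSnn : 0 ≤ S := le_trans hc₀.le hSge
      constructor
      · rw [hGv, hHv, ← ENNReal.ofReal_mul hc₀.le]
        apply ENNReal.ofReal_le_ofReal
        rw [mul_div_assoc' c₀ (h₁ v) (1 - a)]
        apply div_le_div_of_nonneg_right ?_ h1a.le
        nlinarith [hc₀.le]
      · rw [hGv, hHv, ← ENNReal.ofReal_mul hC₂.le]
        apply ENNReal.ofReal_le_ofReal
        rw [mul_div_assoc' (C₁ / m₁) (h₁ v) (1 - a)]
        apply div_le_div_of_nonneg_right ?_ h1a.le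
        have : C₁ / m₁ * m₁ ≤ C₁ / m₁ * h₁ v :=
          mul_le_mul_of_nonneg_left hh1 hC₂.le
        rw [div_mul_cancel₀ C₁ hm.ne'] at this
        linarith
    · -- 1 ≤ a : both sides are ∞
      have hGv : G v = ∞ := aux_G_top ε T c a hεT hcI ha
      have hHv : H v = ∞ := by
        rw [hHdef]
        simp only
        rw [hsub]
        have : (1 - a) / h₁ v ≤ 0 := by
          apply div_nonpos_of_nonpos_of_nonneg (by linarith) hhpos.le
        rw [ENNReal.ofReal_eq_zero.2 this, ENNReal.inv_zero]
      constructor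
      · rw [hGv]; exact le_top
      · rw [hGv, hHv, ENNReal.mul_top (by
          simp only [ne_eq, ENNReal.ofReal_eq_zero, not_le]
          exact hC₂)]
  -- comparison of the integrals
  have hmemae : ∀ᵐ v ∂(volume.restrict I), v ∈ I := ae_restrict_mem hImeas
  have hlow : ENNReal.ofReal c₀ * ∫⁻ v in I, H v ≤ ∫⁻ v in I, G v := by
    rw [← lintegral_const_mul' _ _ ENNReal.ofReal_ne_top]
    apply lintegral_mono_ae
    filter_upwards [hmemae] with v hv using (key v hv).1
  have hupp : ∫⁻ v in I, G v ≤ ENNReal.ofReal (C₁ / m₁) * ∫⁻ v in I, H v := by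
    rw [← lintegral_const_mul' _ _ ENNReal.ofReal_ne_top]
    apply lintegral_mono_ae
    filter_upwards [hmemae] with v hv using (key v hv).2
  constructor
  · intro hG
    have hHfin : (∫⁻ v in I, H v) < ⊤ := by
      by_contra htop
      rw [not_lt, top_le_iff] at htop
      rw [htop, ENNReal.mul_top (by
        simp only [ne_eq, ENNReal.ofReal_eq_zero, not_le]; exact hc₀)] at hlow
      exact (lt_irrefl ⊤ (lt_of_le_of_lt hlow hG))
    refine ⟨?_, hHfin⟩
    -- continuity argument for (a)
    intro v₀ hv₀
    by_contra hcon
    push_neg at hcon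
    set g : (Fin N → ℝ) → ℝ := fun v => 1 / h₁ v - θ v with hgdef
    have hgcont : ContinuousOn g I := by
      apply ContinuousOn.sub ?_ hθcont
      exact ContinuousOn.div continuousOn_const hhcont
        (fun v hv => ne_of_gt (lt_of_lt_of_le hm (hh v hv).1))
    -- H is a.e. finite
    have hHmeas : AEMeasurable H (volume.restrict I) := by
      have : AEMeasurable g (volume.restrict I) := hgcont.aemeasurable hImeas
      exact (ENNReal.measurable_ofReal.comp_aemeasurable this).inv
    have hae : ∀ᵐ v ∂(volume.restrict I), H v < ⊤ := ae_lt_top' hHmeas hHfin.ne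
    have hnull : volume ({v | H v = ⊤} ∩ I) = 0 := by
      rw [← Measure.restrict_apply' hImeas]
      rw [ae_iff] at hae
      simpa only [not_lt, top_le_iff] using hae
    -- the set where g < 0 near v₀ has positive measure
    have hgv₀ : g v₀ < 0 := by rw [hgdef]; simp only; linarith
    have hnbhd : ∃ U : Set (Fin N → ℝ), IsOpen U ∧ v₀ ∈ U ∧ ∀ v ∈ U ∩ I, g v < 0 := by
      have htend := hgcont v₀ hv₀
      have hmem : g ⁻¹' (Set.Iio 0) ∈ nhdsWithin v₀ I :=
        htend (Iio_mem_nhds hgv₀)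
      rw [mem_nhdsWithin] at hmem
      obtain ⟨U, hUopen, hv₀U, hU⟩ := hmem
      exact ⟨U, hUopen, hv₀U, fun v hv => hU hv⟩
    obtain ⟨U, hUopen, hv₀U, hU⟩ := hnbhd
    -- interior of I
    have hIpi : I = Set.pi Set.univ (fun _ : Fin N => Set.Icc ε T) := by
      rw [hI, Set.pi_univ_Icc]
    have hint : interior I = Set.pi Set.univ (fun _ : Fin N => Set.Ioo ε T) := by
      rw [hIpi, interior_pi_set Set.finite_univ]
      simp [interior_Icc]
    have hclos : I ⊆ closure (interior I) := by
      rw [hint, hIpi]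
      intro v hv
      rw [closure_pi_set]
      intro i _
      rw [closure_Ioo (by linarith : ε ≠ T)]
      exact hv i (Set.mem_univ i)
    have hmeet : (U ∩ interior I).Nonempty := by
      have := hclos hv₀
      rw [mem_closure_iff] at this
      exact this U hUopen hv₀U
    have hpos : 0 < volume (U ∩ interior I) :=
      (hUopen.inter isOpen_interior).measure_pos volume hmeet
    have hsubset : U ∩ interior I ⊆ {v | H v = ⊤} ∩ I := by
      intro v hv
      have hvI : v ∈ I := interior_subset hv.2
      have hgv : g v < 0 := hU v ⟨hv.1, hvI⟩
      refine ⟨?_, hvI⟩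
      show H v = ⊤
      rw [hHdef]
      simp only
      rw [ENNReal.ofReal_eq_zero.2 (by rw [hgdef] at hgv; simp only at hgv; linarith),
        ENNReal.inv_zero]
    have := measure_mono_null hsubset hnull
    rw [this] at hpos
    exact lt_irrefl 0 hpos
  · rintro ⟨-, hHfin⟩
    refine lt_of_le_of_lt hupp ?_
    exact ENNReal.mul_lt_top ENNReal.ofReal_lt_top hHfin
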